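/- If g1, g2, g3 satisfy g1^2 - g1 - g2 + g3 = 0 and g1^2*g2 - g1*g2^2 - g2^3 + 2*g1^2*g3 - g1*g3^2 = 0, then g1^5 - 2*g1^3*g2 - g1^3 - g1^2*g2 + 2*g1*g2^2 + g2^3 = 0. (Eliminating g3 from the first two PGL2 characteristic polynomial relations yields this quintic relation between g1 and g2.) -/
import Mathlib

/-- Eliminating `g3` from the first two PGL₂ characteristic polynomial relations yields the
quintic relation between `g1` and `g2`. -/
theorem stmt8 {R : Type*} [CommRing R] (g1 g2 g3 : R)
    (h1 : g1^2 - g1 - g2 + g3 = 0)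
    (h2 : g1^2*g2 - g1*g2^2 - g2^3 + 2*g1^2*g3 - g1*g3^2 = 0) :
    g1^5 - 2*g1^3*g2 - g1^3 - g1^2*g2 + 2*g1*g2^2 + g2^3 = 0 := by
  linear_combination (-1 : R) * h2 + (2*g1^2 - g1*(g3 + g1 + g2 - g1^2)) * h1
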